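/- Let u : ℝ² → ℝ be differentiable, let α, β ∈ ℝ, and suppose (αx - βy)·∂u/∂x + (βx + αy)·∂u/∂y = -1 + γ₁(x,y) on a punctured neighborhood of the origin, where |γ₁| ≤ 1/2. If α = 0, then a contradiction follows; i.e., there is no such u. (Concretely: along the circle x(t) = r cos t, y(t) = r sin t for small r > 0, the function g(t) = u(x(t), y(t)) satisfies g(2π) = g(0) but |g(2π) - g(0)| ≥ π.) -/

import Mathlib

open Metric

theorem no_solution_rotational_pde (u γ₁ : ℝ × ℝ → ℝ) (α β ε : ℝ)
    (hε : 0 < ε) (hα : α = 0)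
    (hdiff : ∀ p ∈ Metric.ball (0 : ℝ × ℝ) ε \ {0}, DifferentiableAt ℝ u p)
    (hγ : ∀ p ∈ Metric.ball (0 : ℝ × ℝ) ε \ {0}, |γ₁ p| ≤ 1 / 2)
    (hpde : ∀ p ∈ Metric.ball (0 : ℝ × ℝ) ε \ {0},
      (α * p.1 - β * p.2) * fderiv ℝ u p (1, 0)
        + (β * p.1 + α * p.2) * fderiv ℝ u p (0, 1) = -1 + γ₁ p) :
    False := by
  subst hα
  set r : ℝ := ε / 2 with hr
  have hr0 : 0 < r := by positivity
  set c : ℝ → ℝ × ℝ := fun t => (r * Real.cos t, r * Real.sin t) with hc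
  have hmem : ∀ t, c t ∈ Metric.ball (0 : ℝ × ℝ) ε \ {0} := by
    intro t
    constructor
    · rw [Metric.mem_ball, dist_zero_right, Prod.norm_def]
      have h1 : |r * Real.cos t| ≤ r := by
        rw [abs_mul, abs_of_pos hr0]
        nlinarith [Real.abs_cos_le_one t]
      have h2 : |r * Real.sin t| ≤ r := by
        rw [abs_mul, abs_of_pos hr0]
        nlinarith [Real.abs_sin_le_one t]
      simp only [Real.norm_eq_abs]
      exact max_lt (lt_of_le_of_lt h1 (by linarith)) (lt_of_le_of_lt h2 (by linarith))
    · intro h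
      simp only [Set.mem_singleton_iff, hc, Prod.mk_eq_zero] at h
      obtain ⟨h1, h2⟩ := h
      have hcos : Real.cos t = 0 := by
        rcases mul_eq_zero.1 h1 with h | h
        · exact absurd h hr0.ne'
        · exact h
      have hsin : Real.sin t = 0 := by
        rcases mul_eq_zero.1 h2 with h | h
        · exact absurd h hr0.ne'
        · exact h
      have := Real.sin_sq_add_cos_sq t
      rw [hsin, hcos] at this
      norm_num at this
  set g : ℝ → ℝ := fun t => u (c t) with hg
  have hgderiv : ∀ t, HasDerivAt g
      (fderiv ℝ u (c t) (r * (-Real.sin t), r * Real.cos t)) t := by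
    intro t
    have h1 : HasDerivAt (fun t => r * Real.cos t) (r * (-Real.sin t)) t :=
      (Real.hasDerivAt_cos t).const_mul r
    have h2 : HasDerivAt (fun t => r * Real.sin t) (r * Real.cos t) t :=
      (Real.hasDerivAt_sin t).const_mul r
    have hcd : HasDerivAt c (r * (-Real.sin t), r * Real.cos t) t := h1.prodMk h2
    exact ((hdiff _ (hmem t)).hasFDerivAt).comp_hasDerivAt t hcd
  -- value of the derivative in terms of partials
  have hval : ∀ t, β * (fderiv ℝ u (c t) (r * (-Real.sin t), r * Real.cos t))
      = -1 + γ₁ (c t) := by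
    intro t
    have hp := hpde _ (hmem t)
    simp only [hc] at hp ⊢
    have hdecomp : ((r * (-Real.sin t), r * Real.cos t) : ℝ × ℝ)
        = (r * (-Real.sin t)) • ((1 : ℝ), (0 : ℝ))
          + (r * Real.cos t) • ((0 : ℝ), (1 : ℝ)) := by
      simp [Prod.ext_iff]
    rw [hdecomp, map_add, map_smul, map_smul]
    simp only [smul_eq_mul] at *
    ring_nf at hp ⊢
    linarith [hp]
  -- g(2π) = g(0)
  have hper : g (2 * Real.pi) = g 0 := by
    simp [hg, hc, Real.cos_two_pi, Real.sin_two_pi]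
  -- MVT
  have h2pi : (0 : ℝ) < 2 * Real.pi := by positivity
  obtain ⟨t₀, ht₀, hslope⟩ := exists_deriv_eq_slope g h2pi
    (fun t _ => (hgderiv t).continuousAt.continuousWithinAt)
    (fun t _ => ((hgderiv t).differentiableAt).differentiableWithinAt)
  rw [hper, sub_self, zero_div] at hslope
  have hd0 : fderiv ℝ u (c t₀) (r * (-Real.sin t₀), r * Real.cos t₀) = 0 := by
    rw [← (hgderiv t₀).deriv]; exact hslope
  have hγ1 : γ₁ (c t₀) = 1 := by
    have := hval t₀
    rw [hd0] at this
    linarith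
  have := hγ _ (hmem t₀)
  rw [hγ1] at this
  norm_num at this
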